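/- Theorem 1(1) (free fermions are polynomial): the Hamiltonian algebra of the Jordan–Wigner transformed free fermion model satisfies dim g(S₀) ≤ 2N(2N−1); in particular it scales polynomially (quadratically) with the number of sites N. -/

import Mathlib

open Matrix

attribute [local instance 100] LieRing.ofAssociativeRing

/-- The four 2×2 Pauli matrices: identity, X, Y, Z. -/
noncomputable def pauli : Fin 4 → Matrix (Fin 2) (Fin 2) ℂ
  | 0 => 1
  | 1 => !![0, 1; 1, 0]
  | 2 => !![0, -Complex.I; Complex.I, 0]
  | 3 => !![1, 0; 0, -1]

/-- The matrix of an `n`-qubit Pauli string `p : Fin n → Fin 4`,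
the Kronecker product of the `pauli (p i)`. -/
noncomputable def PauliMat {n : ℕ} (p : Fin n → Fin 4) :
    Matrix (Fin n → Fin 2) (Fin n → Fin 2) ℂ :=
  Matrix.of fun x y => ∏ i, pauli (p i) (x i) (y i)

/-- The Hamiltonian algebra of a set of Pauli strings: the Lie ℝ-subalgebra of the
complex matrices generated by `{I • P(p) : p ∈ S}`. -/
noncomputable def hamAlg {n : ℕ} (S : Set (Fin n → Fin 4)) :
    LieSubalgebra ℝ (Matrix (Fin n → Fin 2) (Fin n → Fin 2) ℂ) :=
  LieSubalgebra.lieSpan ℝ _ ((fun p => Complex.I • PauliMat p) '' S)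

/-- The Pauli string `→A_iB_j`: letter `A` at `i`, letter `B` at `j`, `Z` strictly
between `i` and `j`, identity elsewhere. -/
def ladderString {n : ℕ} (i j : Fin n) (A B : Fin 4) : Fin n → Fin 4 :=
  fun k => if k = i then A else if k = j then B
    else if min i j < k ∧ k < max i j then 3 else 0

/-- The Pauli string `Z_kZ_l`. -/
def zzString {n : ℕ} (k l : Fin n) : Fin n → Fin 4 :=
  fun m => if m = k ∨ m = l then 3 else 0

/-- The Pauli string `Z_k`. -/
def zString {n : ℕ} (k : Fin n) : Fin n → Fin 4 :=
  fun m => if m = k then 3 else 0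

/-- A choice of letter: `X` if `c = 0`, `Y` if `c = 1`. -/
def ltr (c : Fin 2) : Fin 4 := if c = 0 then 1 else 2

/-- The opposite letter: `Y` if `c = 0`, `X` if `c = 1`. -/
def ltrBar (c : Fin 2) : Fin 4 := if c = 0 then 2 else 1

/-- Pauli strings of the Jordan–Wigner transformed hopping terms of one spin species,
with sites embedded via `v : Fin N → Fin (2N)` and hoppings on the edges of `G`. -/
def Sspin {N : ℕ} (G : SimpleGraph (Fin N)) (v : Fin N → Fin (2 * N)) :
    Set (Fin (2 * N) → Fin 4) :=
  {p | ∃ k l : Fin N, G.Adj k l ∧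
    (p = ladderString (v k) (v l) 1 1 ∨ p = ladderString (v k) (v l) 2 2)}

/-- Pauli strings of the Jordan–Wigner transformed free fermion model. -/
def Sfree {N : ℕ} (G : SimpleGraph (Fin N)) (u d : Fin N → Fin (2 * N)) :
    Set (Fin (2 * N) → Fin 4) :=
  Sspin G u ∪ Sspin G d

/-- Pauli strings of the model with a single on-site Coulomb interaction at fermion
site `i0` (interaction term `Z_{u i0} Z_{d i0}`). -/
def Sint {N : ℕ} (G : SimpleGraph (Fin N)) (u d : Fin N → Fin (2 * N)) (i0 : Fin N) :
    Set (Fin (2 * N) → Fin 4) :=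
  Sfree G u d ∪ {zzString (u i0) (d i0)}


/-! ### Auxiliary material for the proof -/

section PauliAux

open Finset

/-- Product table of Pauli letters (`σ_a σ_b` is proportional to `σ_{pmul a b}`). -/
def pmul (a b : Fin 4) : Fin 4 :=
  ![![0,1,2,3], ![1,0,3,2], ![2,3,0,1], ![3,2,1,0]] a b

/-- Phase table: `σ_a σ_b = pphase a b • σ_{pmul a b}`. -/
noncomputable def pphase (a b : Fin 4) : ℂ :=
  ![![1,1,1,1], ![1,1,Complex.I,-Complex.I], ![1,-Complex.I,1,Complex.I],
    ![1,Complex.I,-Complex.I,1]] a b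

lemma pauli_mul (a b : Fin 4) :
    pauli a * pauli b = pphase a b • pauli (pmul a b) := by
  fin_cases a <;> fin_cases b <;>
    · ext i j
      fin_cases i <;> fin_cases j <;>
        simp [pauli, pphase, pmul, Matrix.mul_apply, Fin.sum_univ_two, Complex.I_mul_I,
          Matrix.vecHead, Matrix.vecTail]

lemma pmul_comm (a b : Fin 4) : pmul a b = pmul b a := by fin_cases a <;> fin_cases b <;> rfl
lemma pmul_self (a : Fin 4) : pmul a a = 0 := by fin_cases a <;> rfl
lemma pphase_self (a : Fin 4) : pphase a a = 1 := by fin_cases a <;> rfl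
lemma pphase_zero_left (a : Fin 4) : pphase 0 a = 1 := by fin_cases a <;> rfl
lemma pphase_zero_right (a : Fin 4) : pphase a 0 = 1 := by fin_cases a <;> rfl
lemma pmul_zero_left (a : Fin 4) : pmul 0 a = a := by fin_cases a <;> rfl
lemma pmul_zero_right (a : Fin 4) : pmul a 0 = a := by fin_cases a <;> rfl

lemma PauliMat_mul {n : ℕ} (p q : Fin n → Fin 4) :
    PauliMat p * PauliMat q
      = (∏ i, pphase (p i) (q i)) • PauliMat (fun i => pmul (p i) (q i)) := by
  ext x y
  simp only [Matrix.mul_apply, PauliMat, Matrix.of_apply, Matrix.smul_apply, smul_eq_mul]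
  have h1 : ∀ z : Fin n → Fin 2,
      (∏ i, pauli (p i) (x i) (z i)) * ∏ i, pauli (q i) (z i) (y i)
        = ∏ i, (pauli (p i) (x i) (z i) * pauli (q i) (z i) (y i)) := fun z => by
    rw [Finset.prod_mul_distrib]
  simp only [h1]
  rw [show (Finset.univ : Finset (Fin n → Fin 2)) = Fintype.piFinset (fun _ => Finset.univ) by
        simp [Fintype.piFinset_univ],
     ← Finset.prod_univ_sum (fun _ => Finset.univ)
        (fun i j => pauli (p i) (x i) j * pauli (q i) j (y i))]
  rw [← Finset.prod_mul_distrib]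
  refine Finset.prod_congr rfl fun i _ => ?_
  have := congrFun (congrFun (pauli_mul (p i) (q i)) (x i)) (y i)
  simpa [Matrix.mul_apply, Matrix.smul_apply] using this

lemma PauliMat_zero {n : ℕ} : PauliMat (n := n) (fun _ => 0) = 1 := by
  ext x y
  simp only [PauliMat, Matrix.of_apply]
  by_cases h : x = y
  · subst h
    simp [pauli, Matrix.one_apply]
  · obtain ⟨i, hi⟩ := Function.ne_iff.mp h
    rw [Matrix.one_apply_ne h]
    exact Finset.prod_eq_zero (Finset.mem_univ i) (by simp [pauli, Matrix.one_apply, hi])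

/-- The Jordan–Wigner Majorana string: `Z` before `q`, the letter `ltr c` at `q`. -/
def majString {n : ℕ} (q : Fin n) (c : Fin 2) : Fin n → Fin 4 :=
  fun m => if m < q then 3 else if m = q then ltr c else 0

/-- The Majorana operator attached to qubit `x.1` and letter choice `x.2`. -/
noncomputable def gm {n : ℕ} (x : Fin n × Fin 2) :
    Matrix (Fin n → Fin 2) (Fin n → Fin 2) ℂ :=
  PauliMat (majString x.1 x.2)

lemma gm_sq {n : ℕ} (x : Fin n × Fin 2) : gm x * gm x = 1 := by
  rw [gm, PauliMat_mul]
  have h1 : (fun i => pmul (majString x.1 x.2 i) (majString x.1 x.2 i))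
      = fun _ => (0 : Fin 4) := funext fun i => pmul_self _
  rw [h1, PauliMat_zero]
  simp [pphase_self]

lemma anticomm_of {n : ℕ} (p q : Fin n → Fin 4) (i0 : Fin n)
    (hsym : ∀ m, m ≠ i0 → pphase (p m) (q m) = pphase (q m) (p m))
    (hflip : pphase (p i0) (q i0) = - pphase (q i0) (p i0)) :
    PauliMat p * PauliMat q = -(PauliMat q * PauliMat p) := by
  rw [PauliMat_mul, PauliMat_mul]
  have hc : (fun i => pmul (q i) (p i)) = fun i => pmul (p i) (q i) :=
    funext fun i => pmul_comm _ _
  rw [hc, ← neg_smul]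
  congr 1
  rw [← Finset.mul_prod_erase _ _ (Finset.mem_univ i0),
      ← Finset.mul_prod_erase _ (fun m => pphase (q m) (p m)) (Finset.mem_univ i0), hflip]
  have h2 : ∏ m ∈ Finset.univ.erase i0, pphase (p m) (q m)
      = ∏ m ∈ Finset.univ.erase i0, pphase (q m) (p m) :=
    Finset.prod_congr rfl fun m hm => hsym m (Finset.mem_erase.mp hm).1
  rw [h2]; ring

lemma pphase_ltr_flip (c c' : Fin 2) (h : c ≠ c') :
    pphase (ltr c) (ltr c') = - pphase (ltr c') (ltr c) := by
  fin_cases c <;> fin_cases c' <;> simp_all [ltr, pphase, Matrix.vecHead, Matrix.vecTail]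

lemma pphase_ltr_z (c : Fin 2) : pphase (ltr c) 3 = - pphase 3 (ltr c) := by
  fin_cases c <;> simp [ltr, pphase, Matrix.vecHead, Matrix.vecTail]

lemma gm_anticomm_lt {n : ℕ} (a b : Fin n) (c c' : Fin 2) (hab : a < b) :
    gm (a, c) * gm (b, c') = -(gm (b, c') * gm (a, c)) := by
  apply anticomm_of _ _ a
  · intro m hm
    rcases lt_trichotomy m a with h | h | h
    · simp [majString, h, h.trans hab]
    · exact absurd h hm
    · have h1 : majString a c m = 0 := by simp [majString, not_lt.mpr h.le, hm, h.ne']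
      rw [h1, pphase_zero_left, pphase_zero_right]
  · have h1 : majString a c a = ltr c := by simp [majString]
    have h2 : majString b c' a = 3 := by simp [majString, hab]
    rw [h1, h2]; exact pphase_ltr_z c

lemma gm_anticomm {n : ℕ} (x y : Fin n × Fin 2) (h : x ≠ y) :
    gm x * gm y = -(gm y * gm x) := by
  obtain ⟨a, c⟩ := x; obtain ⟨b, c'⟩ := y
  rcases lt_trichotomy a b with hab | hab | hab
  · exact gm_anticomm_lt a b c c' hab
  · subst hab
    have hcc : c ≠ c' := fun hc => h (by rw [hc])
    apply anticomm_of _ _ a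
    · intro m hm
      rcases lt_trichotomy m a with h1 | h1 | h1
      · simp [majString, h1]
      · exact absurd h1 hm
      · have : majString a c m = 0 := by simp [majString, not_lt.mpr h1.le, hm, h1.ne']
        rw [this, pphase_zero_left]
        have : majString a c' m = 0 := by simp [majString, not_lt.mpr h1.le, hm, h1.ne']
        rw [this, pphase_zero_right]
    · have h1 : majString a c a = ltr c := by simp [majString]
      have h2 : majString a c' a = ltr c' := by simp [majString]
      rw [h1, h2]; exact pphase_ltr_flip c c' hcc
  · rw [gm_anticomm_lt b a c' c hab, neg_neg]

lemma ladderString_comm {n : ℕ} (i j : Fin n) (A B : Fin 4) (h : i ≠ j) :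
    ladderString i j A B = ladderString j i B A := by
  funext k
  simp only [ladderString]
  rcases eq_or_ne k i with hk | hk
  · simp [hk, h, h.symm]
  · rcases eq_or_ne k j with hk2 | hk2
    · simp [hk, hk2, h.symm]
    · simp [hk, hk2, min_comm, max_comm]

lemma gm_mul_ladder {n : ℕ} (a b : Fin n) (c c' : Fin 2) (hab : a < b) :
    gm (a, c) * gm (b, c')
      = pphase (ltr c) 3 • PauliMat (ladderString a b (pmul (ltr c) 3) (ltr c')) := by
  rw [gm, gm, PauliMat_mul]
  have hmin : min a b = a := min_eq_left hab.le
  have hmax : max a b = b := max_eq_right hab.le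
  have hstr : (fun m => pmul (majString a c m) (majString b c' m))
      = ladderString a b (pmul (ltr c) 3) (ltr c') := by
    funext m
    simp only [majString, ladderString, hmin, hmax]
    rcases lt_trichotomy m a with h1 | h1 | h1
    · simp [h1, h1.trans hab, h1.ne, (h1.trans hab).ne, not_lt.mpr h1.le, pmul_self]
    · simp [h1, hab, hab.ne']
    · rcases lt_trichotomy m b with h2 | h2 | h2
      · simp [not_lt.mpr h1.le, h1.ne', h2, h2.ne, h1, pmul_zero_left]
      · simp [h2, not_lt.mpr h1.le, h1.ne', hab.ne', pmul_zero_left, lt_asymm hab]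
      · simp [not_lt.mpr h1.le, not_lt.mpr h2.le, h1.ne', h2.ne', pmul_zero_left]
  rw [hstr]
  congr 1
  rw [Finset.prod_eq_single a]
  · have h1 : majString a c a = ltr c := by simp [majString]
    have h2 : majString b c' a = 3 := by simp [majString, hab]
    rw [h1, h2]
  · intro m _ hm
    rcases lt_trichotomy m a with h1 | h1 | h1
    · have : majString a c m = 3 := by simp [majString, h1]
      have h2 : majString b c' m = 3 := by simp [majString, h1.trans hab]
      rw [this, h2, pphase_self]
    · exact absurd h1 hm
    · have : majString a c m = 0 := by simp [majString, not_lt.mpr h1.le, hm, h1.ne']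
      rw [this, pphase_zero_left]
  · simp

lemma I_smul_ladder_eq {n : ℕ} (a b : Fin n) (hab : a < b) (c c' : Fin 2) :
    ∃ (r : ℝ) (cc : Fin 2),
      Complex.I • PauliMat (ladderString a b (ltr c) (ltr c'))
        = r • (gm (a, cc) * gm (b, c')) := by
  fin_cases c
  · refine ⟨1, 1, ?_⟩
    rw [one_smul, gm_mul_ladder a b 1 c' hab]
    norm_num [ltr, pmul, pphase, Matrix.vecHead, Matrix.vecTail, Matrix.cons_val_three, Matrix.cons_val_two, Matrix.cons_val_one]
  · refine ⟨-1, 0, ?_⟩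
    rw [gm_mul_ladder a b 0 c' hab]
    have h1 : pphase (ltr 0) 3 = -Complex.I := by
      norm_num [ltr, pphase, Matrix.vecHead, Matrix.vecTail, Matrix.cons_val_three, Matrix.cons_val_two, Matrix.cons_val_one]
    have h2 : pmul (ltr 0) 3 = ltr 1 := by norm_num [ltr, pmul, Matrix.vecHead, Matrix.vecTail, Matrix.cons_val_three, Matrix.cons_val_two, Matrix.cons_val_one]
    rw [h1, h2, ← smul_assoc]
    norm_num

end PauliAux


section brkt
variable {R : Type*} [Ring R] {ι : Type*} (g : ι → R)

lemma swap' (hac : ∀ i j, i ≠ j → g i * g j = -(g j * g i))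
    (i j : ι) (h : i ≠ j) (t : R) : g i * (g j * t) = -(g j * (g i * t)) := by
  rw [← mul_assoc, hac i j h, neg_mul, mul_assoc]

lemma sq' (hsq : ∀ i, g i * g i = 1) (i : ι) (t : R) : g i * (g i * t) = t := by
  rw [← mul_assoc, hsq, one_mul]

lemma brkt_cases (hsq : ∀ i, g i * g i = 1)
    (hac : ∀ i j, i ≠ j → g i * g j = -(g j * g i))
    (a b c d : ι) (hab : a ≠ b) (hcd : c ≠ d) :
    ⁅g a * g b, g c * g d⁆ = 0 ∨
    ((∃ s, (s = a ∨ s = b) ∧ (s = c ∨ s = d)) ∧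
     ∃ x y : ι, ∃ r : ℤ, x ≠ y ∧ (x = a ∨ x = b) ∧ (y = c ∨ y = d) ∧
       ⁅g a * g b, g c * g d⁆ = r • (g x * g y)) := by
  rw [Ring.lie_def]
  by_cases hca : a = c
  · subst hca
    by_cases hbd : b = d
    · subst hbd; left; simp
    · right
      refine ⟨⟨a, Or.inl rfl, Or.inl rfl⟩, b, d, -2, hbd, Or.inr rfl, Or.inr rfl, ?_⟩
      have T1 : g a * g b * (g a * g d) = -(g b * g d) := by
        rw [mul_assoc, swap' g hac b a (Ne.symm hab), mul_neg, sq' g hsq]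
      have T2 : g a * g d * (g a * g b) = g b * g d := by
        rw [mul_assoc, swap' g hac d a (fun h => hcd h.symm), mul_neg, sq' g hsq,
          hac d b (fun h => hbd h.symm), neg_neg]
      rw [T1, T2]
      simp only [neg_smul, two_smul]; abel
  · by_cases hda : a = d
    · subst hda
      by_cases hbc : b = c
      · subst hbc
        left
        have T1 : g a * g b * (g b * g a) = 1 := by
          rw [mul_assoc, sq' g hsq, hsq]
        have T2 : g b * g a * (g a * g b) = 1 := by
          rw [mul_assoc, sq' g hsq, hsq]
        rw [T1, T2, sub_self]
      · right
        refine ⟨⟨a, Or.inl rfl, Or.inr rfl⟩, b, c, 2, hbc, Or.inr rfl, Or.inl rfl, ?_⟩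
        have T1 : g a * g b * (g c * g a) = g b * g c := by
          rw [mul_assoc, swap' g hac b c hbc]
          simp only [mul_neg, neg_neg]
          rw [hac b a (Ne.symm hab)]
          simp only [mul_neg, neg_neg]
          rw [swap' g hac c a (fun h => hca h.symm)]
          simp only [mul_neg, neg_neg]
          rw [sq' g hsq, hac c b (fun h => hbc h.symm)]
          simp only [neg_neg]
        have T2 : g c * g a * (g a * g b) = -(g b * g c) := by
          rw [mul_assoc, sq' g hsq, hac c b (fun h => hbc h.symm)]
        rw [T1, T2, two_smul]; abel
    · by_cases hbc : b = c
      · subst hbc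
        right
        have hbd : b ≠ d := hcd
        refine ⟨⟨b, Or.inr rfl, Or.inl rfl⟩, a, d, 2, hda, Or.inl rfl, Or.inr rfl, ?_⟩
        have T1 : g a * g b * (g b * g d) = g a * g d := by
          rw [mul_assoc, sq' g hsq]
        have T2 : g b * g d * (g a * g b) = -(g a * g d) := by
          rw [mul_assoc, swap' g hac d a (fun h => hda h.symm)]
          simp only [mul_neg, neg_neg]
          rw [hac d b (fun h => hbd h.symm)]
          simp only [mul_neg, neg_neg]
          rw [swap' g hac a b hab]
          simp only [mul_neg, neg_neg]
          rw [sq' g hsq]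
        rw [T1, T2, two_smul]; abel
      · by_cases hbd : b = d
        · subst hbd
          right
          refine ⟨⟨b, Or.inr rfl, Or.inr rfl⟩, a, c, -2, hca, Or.inl rfl, Or.inl rfl, ?_⟩
          have T1 : g a * g b * (g c * g b) = -(g a * g c) := by
            rw [mul_assoc, swap' g hac b c hbc]
            simp only [mul_neg, neg_neg]
            rw [hsq b, mul_one]
          have T2 : g c * g b * (g a * g b) = g a * g c := by
            rw [mul_assoc, swap' g hac b a (Ne.symm hab)]
            simp only [mul_neg, neg_neg]
            rw [hsq b, mul_one, hac c a (fun h => hca h.symm)]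
            simp only [neg_neg]
          rw [T1, T2]
          simp only [neg_smul, two_smul]; abel
        · left
          have T2 : g c * g d * (g a * g b) = g a * g b * (g c * g d) := by
            rw [mul_assoc, swap' g hac d a (fun h => hda h.symm)]
            simp only [mul_neg, neg_neg]
            rw [hac d b (fun h => hbd h.symm)]
            simp only [mul_neg, neg_neg, neg_mul]
            rw [swap' g hac c a (fun h => hca h.symm),
              swap' g hac c b (fun h => hbc h.symm)]
            simp only [mul_neg, neg_neg]
            rw [← mul_assoc]
          rw [T2, sub_self]
end brkt

/-- Theorem 1(1): the Hamiltonian algebra of the Jordan–Wigner transformed free fermion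
model has dimension at most `2N(2N − 1)`, i.e. polynomial (quadratic) in `N`. -/
theorem finrank_hamAlg_free_fermion_le (N : ℕ) (hN : 1 ≤ N)
    (G : SimpleGraph (Fin N)) (hG : G.Connected)
    (u d : Fin N → Fin (2 * N)) (hu : Function.Injective u) (hd : Function.Injective d)
    (hdisj : Disjoint (Set.range u) (Set.range d))
    (hunion : Set.range u ∪ Set.range d = Set.univ) :
    Module.finrank ℝ (hamAlg (Sfree G u d)) ≤ 2 * N * (2 * N - 1) := by
  classical
  -- the two spin species
  set v : Fin 2 → Fin N → Fin (2 * N) := ![u, d] with hv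
  have hv_inj : ∀ σ, Function.Injective (v σ) := by
    intro σ; fin_cases σ <;> simp [hv] <;> [exact hu; exact hd]
  have hv_range : ∀ σ τ (k k' : Fin N), σ ≠ τ → v σ k ≠ v τ k' := by
    intro σ τ k k' hst h
    fin_cases σ <;> fin_cases τ <;> simp_all [hv]
    · exact Set.disjoint_left.mp hdisj ⟨k, rfl⟩ ⟨k', h.symm⟩
    · exact Set.disjoint_left.mp hdisj ⟨k', rfl⟩ ⟨k, h⟩
  -- Majorana indexing within a species
  have hdivlt : ∀ m : Fin (2 * N), m.val / 2 < N := fun m => by have := m.isLt; omega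
  have hmodlt : ∀ m : Fin (2 * N), m.val % 2 < 2 := fun m => by omega
  set ms : Fin 2 → Fin (2 * N) → Fin (2 * N) × Fin 2 :=
    fun σ m => (v σ ⟨m.val / 2, hdivlt m⟩, ⟨m.val % 2, hmodlt m⟩) with hms
  have henclt : ∀ (k : Fin N) (c : Fin 2), 2 * k.val + c.val < 2 * N := fun k c => by
    have := k.isLt; have := c.isLt; omega
  set enc : Fin N → Fin 2 → Fin (2 * N) := fun k c => ⟨2 * k.val + c.val, henclt k c⟩ with henc
  have hms_enc : ∀ σ k c, ms σ (enc k c) = (v σ k, c) := by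
    intro σ k c
    have h1 : (⟨(enc k c).val / 2, hdivlt _⟩ : Fin N) = k := by
      ext; simp [henc]; omega
    have h2 : (⟨(enc k c).val % 2, hmodlt _⟩ : Fin 2) = c := by
      ext; simp [henc]; omega
    simp [hms, h1, h2]
  have hms_inj : ∀ σ, Function.Injective (ms σ) := by
    intro σ m m' h
    rw [hms, Prod.ext_iff] at h
    have h3 := hv_inj σ h.1
    have h4 : m.val / 2 = m'.val / 2 := congrArg Fin.val h3
    have h5 : m.val % 2 = m'.val % 2 := congrArg Fin.val h.2
    ext; omega
  have hms_sp : ∀ σ τ (m r : Fin (2 * N)), (ms σ m).1 = (ms τ r).1 → σ = τ := by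
    intro σ τ m r h
    by_contra hst
    exact hv_range σ τ _ _ hst h
  -- the spanning family
  set F : Fin 2 × Fin (2 * N) × Fin (2 * N) →
      Matrix (Fin (2 * N) → Fin 2) (Fin (2 * N) → Fin 2) ℂ :=
    fun t => gm (ms t.1 t.2.1) * gm (ms t.1 t.2.2) with hF
  set J : Finset (Fin 2 × Fin (2 * N) × Fin (2 * N)) :=
    Finset.univ.filter fun t => t.2.1 < t.2.2 with hJ
  set W : Submodule ℝ (Matrix (Fin (2 * N) → Fin 2) (Fin (2 * N) → Fin 2) ℂ) :=
    Submodule.span ℝ (F '' ↑J) with hW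
  -- membership of products of two distinct same-species Majoranas
  have pairmem : ∀ (σ : Fin 2) (m m' : Fin (2 * N)), m ≠ m' →
      gm (ms σ m) * gm (ms σ m') ∈ W := by
    intro σ m m' hmm'
    rcases lt_or_gt_of_ne hmm' with h | h
    · exact Submodule.subset_span ⟨(σ, m, m'), by simp [hJ, h], rfl⟩
    · have hne : ms σ m ≠ ms σ m' := fun he => hmm' (hms_inj σ he)
      rw [gm_anticomm _ _ hne]
      exact neg_mem (Submodule.subset_span ⟨(σ, m', m), by simp [hJ, h], rfl⟩)
  -- brackets of generators stay in W
  have hgen : ∀ x ∈ F '' ↑J, ∀ y ∈ F '' ↑J, ⁅x, y⁆ ∈ W := by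
    rintro _ ⟨⟨σ, m, m'⟩, htm, rfl⟩ _ ⟨⟨τ, r, r'⟩, htr, rfl⟩
    have hm : m < m' := by simpa [hJ] using htm
    have hr : r < r' := by simpa [hJ] using htr
    have hab : ms σ m ≠ ms σ m' := fun he => hm.ne (hms_inj σ he)
    have hcd : ms τ r ≠ ms τ r' := fun he => hr.ne (hms_inj τ he)
    rcases brkt_cases gm gm_sq gm_anticomm (ms σ m) (ms σ m') (ms τ r) (ms τ r') hab hcd with
      h0 | ⟨⟨s, hs1, hs2⟩, x, y, rr, hxy, hx, hy, heq⟩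
    · show ⁅gm (ms σ m) * gm (ms σ m'), gm (ms τ r) * gm (ms τ r')⁆ ∈ W
      rw [h0]; exact zero_mem W
    · have hστ : σ = τ := by
        rcases hs1 with h1 | h1 <;> rcases hs2 with h2 | h2 <;>
          exact hms_sp σ τ _ _ (congrArg Prod.fst (h1.symm.trans h2))
      subst hστ
      show ⁅gm (ms σ m) * gm (ms σ m'), gm (ms σ r) * gm (ms σ r')⁆ ∈ W
      rw [heq]
      have : ∀ (i j : Fin (2 * N)), x = ms σ i → y = ms σ j →
          (rr : ℤ) • (gm x * gm y) ∈ W := by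
        intro i j hi hj
        subst hi; subst hj
        have hij : i ≠ j := fun he => hxy (by rw [he])
        exact zsmul_mem (pairmem σ i j hij) rr
      rcases hx with hx | hx <;> rcases hy with hy | hy
      · exact this m r hx hy
      · exact this m r' hx hy
      · exact this m' r hx hy
      · exact this m' r' hx hy
  -- W is closed under brackets
  have hWlie : ∀ x ∈ W, ∀ y ∈ W, ⁅x, y⁆ ∈ W := by
    have inner : ∀ x ∈ F '' ↑J, ∀ y ∈ W, ⁅x, y⁆ ∈ W := by
      intro x hx
      have hle : W ≤
          { carrier := {y | ⁅x, y⁆ ∈ W}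
            add_mem' := fun {a b} ha hb => by
              simp only [Set.mem_setOf_eq, lie_add] at *
              exact add_mem ha hb
            zero_mem' := by simp
            smul_mem' := fun r y hy => by
              simp only [Set.mem_setOf_eq, lie_smul] at *
              exact Submodule.smul_mem W r hy } := by
        rw [hW]
        exact Submodule.span_le.mpr (fun y hy => hgen x hx y hy)
      exact fun y hy => hle hy
    intro x hx y hy
    have hle : W ≤
        { carrier := {z | ⁅z, y⁆ ∈ W}
          add_mem' := fun {a b} ha hb => by
            simp only [Set.mem_setOf_eq, add_lie] at *
            exact add_mem ha hb
          zero_mem' := by simp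
          smul_mem' := fun r z hz => by
            simp only [Set.mem_setOf_eq, smul_lie] at *
            exact Submodule.smul_mem W r hz } := by
      rw [hW]
      exact Submodule.span_le.mpr (fun z hz => inner z hz y hy)
    exact hle hx
  -- the generating set lies in W
  have genmem : ∀ p ∈ Sfree G u d, Complex.I • PauliMat p ∈ W := by
    have key : ∀ (σ : Fin 2) (k l : Fin N) (c : Fin 2), k ≠ l →
        Complex.I • PauliMat (ladderString (v σ k) (v σ l) (ltr c) (ltr c)) ∈ W := by
      intro σ k l c hkl
      have hne : v σ k ≠ v σ l := fun he => hkl (hv_inj σ he)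
      have main : ∀ (k l : Fin N), k ≠ l → v σ k < v σ l →
          Complex.I • PauliMat (ladderString (v σ k) (v σ l) (ltr c) (ltr c)) ∈ W := by
        intro k l hkl hlt
        obtain ⟨r, cc, heq⟩ := I_smul_ladder_eq (v σ k) (v σ l) hlt c c
        rw [heq, ← hms_enc σ k cc, ← hms_enc σ l c]
        refine Submodule.smul_mem _ r (pairmem σ _ _ ?_)
        intro he
        have h1 : (enc k cc).val = (enc l c).val := congrArg Fin.val he
        simp [henc] at h1
        exact hkl (Fin.ext (by omega))
      rcases lt_or_gt_of_ne hne with hlt | hgt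
      · exact main k l hkl hlt
      · rw [ladderString_comm _ _ _ _ hne]
        exact main l k (Ne.symm hkl) hgt
    intro p hp
    rcases hp with hp | hp <;> obtain ⟨k, l, hadj, hpe | hpe⟩ := hp <;> subst hpe
    · exact key 0 k l 0 hadj.ne
    · exact key 0 k l 1 hadj.ne
    · exact key 1 k l 0 hadj.ne
    · exact key 1 k l 1 hadj.ne
  -- assemble the Lie subalgebra
  set W' : LieSubalgebra ℝ (Matrix (Fin (2 * N) → Fin 2) (Fin (2 * N) → Fin 2) ℂ) :=
    { W with lie_mem' := fun {x y} hx hy => hWlie x hx y hy } with hW'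
  have hspan : hamAlg (Sfree G u d) ≤ W' := by
    rw [hamAlg]
    refine LieSubalgebra.lieSpan_le.mpr ?_
    rintro _ ⟨p, hp, rfl⟩
    exact genmem p hp
  -- dimension count
  have h1 : Module.finrank ℝ (hamAlg (Sfree G u d)) ≤ Module.finrank ℝ W :=
    Submodule.finrank_mono (fun z hz => hspan hz)
  have h2 : Module.finrank ℝ W ≤ (J.image F).card := by
    have h := finrank_span_finset_le_card (R := ℝ) (J.image F)
    rw [Set.finrank, Finset.coe_image] at h
    exact h
  have h3 : (J.image F).card ≤ J.card := Finset.card_image_le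
  -- counting J
  set K : Finset (Fin (2 * N) × Fin (2 * N)) :=
    Finset.univ.filter fun y => y.1 < y.2 with hK
  set Kgt : Finset (Fin (2 * N) × Fin (2 * N)) :=
    Finset.univ.filter fun y => y.2 < y.1 with hKgt
  have hJprod : J = (Finset.univ : Finset (Fin 2)) ×ˢ K := by
    ext t
    simp [hJ, hK, Finset.mem_product]
  have hJcard : J.card = 2 * K.card := by
    rw [hJprod, Finset.card_product, Finset.card_univ, Fintype.card_fin]
  have hKK : K.card = Kgt.card := by
    refine Finset.card_bij' (fun y _ => (y.2, y.1)) (fun y _ => (y.2, y.1)) ?_ ?_ ?_ ?_ <;>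
      simp [hK, hKgt]
  have hdisjK : Disjoint K Kgt := by
    rw [Finset.disjoint_left]
    intro y hy hy'
    rw [hK, Finset.mem_filter] at hy
    rw [hKgt, Finset.mem_filter] at hy'
    exact lt_asymm hy.2 hy'.2
  have hsub : K ∪ Kgt ⊆ (Finset.univ : Finset (Fin (2 * N))).offDiag := by
    intro y hy
    rw [Finset.mem_union] at hy
    rw [Finset.mem_offDiag]
    refine ⟨Finset.mem_univ _, Finset.mem_univ _, ?_⟩
    rcases hy with hy | hy
    · rw [hK, Finset.mem_filter] at hy; exact hy.2.ne
    · rw [hKgt, Finset.mem_filter] at hy; exact hy.2.ne'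
  have hcount : 2 * K.card ≤ 2 * N * (2 * N - 1) := by
    have e1 : K.card + Kgt.card = (K ∪ Kgt).card :=
      (Finset.card_union_of_disjoint hdisjK).symm
    have e2 : (K ∪ Kgt).card ≤ (Finset.univ : Finset (Fin (2 * N))).offDiag.card :=
      Finset.card_le_card hsub
    have e3 : (Finset.univ : Finset (Fin (2 * N))).offDiag.card
        = 2 * N * (2 * N) - 2 * N := by
      rw [Finset.offDiag_card, Finset.card_univ, Fintype.card_fin]
    have e4 : 2 * N * (2 * N - 1) = 2 * N * (2 * N) - 2 * N := Nat.mul_sub_one ..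
    omega
  calc Module.finrank ℝ (hamAlg (Sfree G u d)) ≤ (J.image F).card := le_trans h1 h2
    _ ≤ J.card := h3
    _ = 2 * K.card := hJcard
    _ ≤ 2 * N * (2 * N - 1) := hcount
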